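/- Let B_n satisfy B_n B_m = -B_{m-1} B_{n+1}, and let λ be a partition of length l. For an integer n with λ_{j+1} - j ≤ n ≤ λ_j - j - 1 for some j ∈ {0, …, l} (conventions λ₀ = ∞, λ_{l+1} = 0), one has B_n B_{λ₁} ⋯ B_{λ_l} = (-1)^j B_{ν₁} ⋯ B_{ν_{l+1}}, where ν = (λ₁ - 1, …, λ_j - 1, n + j, λ_{j+1}, …, λ_l) = λ^{(n+j+1)} is a partition. -/

import Mathlib

private lemma stmt16_aux {R : Type*} [Ring R] (B : ℤ → R)
    (hrel : ∀ n m : ℤ, B n * B m = -(B (m - 1) * B (n + 1))) :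
    ∀ (xs : List ℤ) (n : ℤ) (r : R),
      B n * ((xs.map B).prod * r) =
        (-1 : R) ^ xs.length *
          (((xs.map (· - 1)).map B).prod * (B (n + xs.length) * r))
  | [], n, r => by simp
  | x :: xs, n, r => by
    have ih := stmt16_aux B hrel xs (n + 1) r
    simp only [List.map_cons, List.prod_cons, List.length_cons]
    rw [mul_assoc (B x), ← mul_assoc (B n), hrel, neg_mul, mul_assoc, ih,
      show n + 1 + (xs.length : ℤ) = n + ((xs.length : ℤ) + 1) by ring]
    push_cast
    set L := xs.length with hL
    set A := B (x - 1) with hA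
    set M := (List.map B (List.map (fun x => x - 1) xs)).prod with hM
    set Q := B (n + ((L : ℤ) + 1)) * r with hQ
    rw [pow_succ, mul_assoc ((-1 : R) ^ L) (-1), neg_one_mul, mul_neg, neg_inj,
      ← mul_assoc A ((-1 : R) ^ L), ← ((Commute.neg_one_left A).pow_left L).eq,
      mul_assoc, ← mul_assoc A M Q]

theorem stmt_16 {R : Type*} [Ring R] (B : ℤ → R)
    (hrel : ∀ n m : ℤ, B n * B m = -(B (m - 1) * B (n + 1)))
    (l : ℕ) (p : Fin l → ℕ) (hp : Antitone p) (hpos : ∀ a, 1 ≤ p a)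
    (j : ℕ) (hj : j ≤ l) (n : ℤ)
    (hlow : (if h : j < l then (p ⟨j, h⟩ : ℤ) else 0) - (j : ℤ) ≤ n)
    (hup : ∀ h : 0 < j, n ≤ (p ⟨j - 1, lt_of_lt_of_le (Nat.sub_lt h one_pos) hj⟩ : ℤ) - (j : ℤ) - 1) :
    ∃ ν : Fin (l + 1) → ℤ,
      (∀ a : Fin (l + 1), ν a =
        if h : (a : ℕ) < j then (p ⟨a, lt_of_lt_of_le h hj⟩ : ℤ) - 1
        else if (a : ℕ) = j then n + (j : ℤ)
        else if h2 : (a : ℕ) - 1 < l then (p ⟨(a : ℕ) - 1, h2⟩ : ℤ) else 0) ∧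
      Antitone ν ∧ (∀ a, 0 ≤ ν a) ∧
      B n * (List.ofFn (fun a => B ((p a : ℤ)))).prod =
        (-1 : R) ^ j * (List.ofFn (fun a => B (ν a))).prod := by
  set ν : Fin (l + 1) → ℤ := fun a =>
        if h : (a : ℕ) < j then (p ⟨a, lt_of_lt_of_le h hj⟩ : ℤ) - 1
        else if (a : ℕ) = j then n + (j : ℤ)
        else if h2 : (a : ℕ) - 1 < l then (p ⟨(a : ℕ) - 1, h2⟩ : ℤ) else 0 with hν
  set q : ℕ → ℤ := fun i => if h : i < l then (p ⟨i, h⟩ : ℤ) else 0 with hqdef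
  have hql : ∀ (i : ℕ) (h : i < l), q i = (p ⟨i, h⟩ : ℤ) := by
    intro i h; simp only [hqdef]; exact dif_pos h
  have hq0 : ∀ i, 0 ≤ q i := by
    intro i; simp only [hqdef]; split_ifs with h
    · positivity
    · exact le_refl 0
  have hq1 : ∀ i, i < l → 1 ≤ q i := by
    intro i h; rw [hql i h]; exact_mod_cast hpos ⟨i, h⟩
  have hq2 : ∀ i k, i ≤ k → q k ≤ q i := by
    intro i k hik
    simp only [hqdef]
    split_ifs with hk hi hi
    · exact_mod_cast hp (a := ⟨i, hi⟩) (b := ⟨k, hk⟩) (by simp [hik])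
    · omega
    · positivity
    · exact le_refl 0
  have hν' : ∀ a : Fin (l + 1), ν a =
      if (a : ℕ) < j then q a - 1 else if (a : ℕ) = j then n + (j : ℤ) else q ((a : ℕ) - 1) := by
    intro a
    simp only [hν, hqdef]
    by_cases h : (a : ℕ) < j
    · rw [dif_pos h, if_pos h, dif_pos (by omega)]
    · rw [dif_neg h, if_neg h]
  have hlow' : q j - (j : ℤ) ≤ n := by
    simp only [hqdef]; exact hlow
  have hup' : ∀ h : 0 < j, n ≤ q (j - 1) - (j : ℤ) - 1 := by
    intro h
    rw [hql (j - 1) (by omega)]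
    exact hup h
  have hnj : 0 ≤ n + (j : ℤ) := by
    have := hq0 j; omega
  refine ⟨ν, fun a => rfl, ?_, ?_, ?_⟩
  · -- Antitone
    rw [Fin.antitone_iff_succ_le]
    intro i
    rw [hν', hν']
    simp only [Fin.val_succ, Fin.coe_castSucc, Nat.add_sub_cancel]
    rcases lt_trichotomy ((i : ℕ) + 1) j with h | h | h
    · rw [if_pos h, if_pos (by omega)]
      have := hq2 i ((i : ℕ) + 1) (by omega)
      omega
    · rw [if_neg (by omega), if_pos h, if_pos (by omega)]
      have h2 := hup' (by omega)
      rw [show j - 1 = (i : ℕ) by omega] at h2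
      omega
    · rw [if_neg (by omega), if_neg (by omega)]
      rcases Nat.lt_trichotomy (i : ℕ) j with hij | hij | hij
      · omega
      · rw [if_neg (by omega), if_pos hij, hij]
        omega
      · rw [if_neg (by omega), if_neg (by omega)]
        have := hq2 ((i : ℕ) - 1) i (by omega)
        omega
  · -- nonneg
    intro a
    rw [hν']
    split_ifs with h1 h2
    · have := hq1 a (by omega); omega
    · exact hnj
    · exact hq0 _
  · -- product identity
    obtain ⟨k, rfl⟩ : ∃ k, l = j + k := ⟨l - j, by omega⟩
    have v1 : ∀ a : Fin j, ν (Fin.castAdd (k + 1) a) = (p (Fin.castAdd k a) : ℤ) - 1 := by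
      intro a
      rw [hν']
      rw [if_pos (show ((Fin.castAdd (k + 1) a : Fin (j + k + 1)) : ℕ) < j by
        simpa using a.isLt)]
      simp only [Fin.coe_castAdd]
      rw [hql a (by omega)]
      have : (⟨(a : ℕ), by omega⟩ : Fin (j + k)) = Fin.castAdd k a := by ext; simp
      rw [this]
    have v2 : ν (Fin.natAdd j (0 : Fin (k + 1))) = n + (j : ℤ) := by
      rw [hν']
      simp only [Fin.coe_natAdd, Fin.val_zero, Nat.add_zero]
      rw [if_neg (lt_irrefl j)]
      simp
    have v3 : ∀ a : Fin k, ν (Fin.natAdd j a.succ) = (p (Fin.natAdd j a) : ℤ) := by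
      intro a
      rw [hν']
      simp only [Fin.coe_natAdd, Fin.val_succ]
      rw [if_neg (by omega), if_neg (by omega),
        show j + ((a : ℕ) + 1) - 1 = j + (a : ℕ) by omega, hql (j + (a : ℕ)) (by omega)]
      have : (⟨j + (a : ℕ), by omega⟩ : Fin (j + k)) = Fin.natAdd j a := by ext; simp
      rw [this]
    have e1 : (List.ofFn fun a : Fin (j + k) => B ((p a : ℤ))) =
        (List.ofFn fun a : Fin j => B ((p (Fin.castAdd k a) : ℤ))) ++
        (List.ofFn fun a : Fin k => B ((p (Fin.natAdd j a) : ℤ))) := List.ofFn_add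
    have e2 : (List.ofFn fun a : Fin (j + k + 1) => B (ν a)) =
        (List.ofFn fun a : Fin j => B (ν (Fin.castAdd (k + 1) a))) ++
        (List.ofFn fun a : Fin (k + 1) => B (ν (Fin.natAdd j a))) :=
      List.ofFn_add (n := j) (m := k + 1) (f := fun a : Fin (j + (k + 1)) => B (ν a))
    rw [e1, e2, List.prod_append, List.prod_append, List.ofFn_succ, List.prod_cons]
    simp only [v1, v2, v3]
    have key := stmt16_aux B hrel
      (List.ofFn fun a : Fin j => ((p (Fin.castAdd k a) : ℤ))) n
      ((List.ofFn fun a : Fin k => B ((p (Fin.natAdd j a) : ℤ))).prod)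
    simp only [List.map_ofFn, List.length_ofFn, Function.comp_def] at key
    exact key
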